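/- (Multidimensional bound for the classification indicator.) Let P(·|γ) be a family of probability distributions on 𝒳 indexed by γ in an open subset of ℝ^d, differentiable in each coordinate γ_i. Let K ≥ 1 and let Q: {1,…,K} × 𝒳 → [0,1] satisfy Σ_{y=1}^K Q(y|x) = 1 for every x. Define Q(y|γ) = Σ_{x∈𝒳} P(x|γ) Q(y|x) and σ_y(γ) = √(Σ_{x∈𝒳} P(x|γ) Q(y|x)² − Q(y|γ)²). Then the indicator I₁(γ) = (1/K) Σ_{y=1}^K √(Σ_{i=1}^d (∂Q(y|γ)/∂γ_i)²) satisfies I₁(γ) ≤ (1/K) Σ_{y=1}^K σ_y(γ) √(tr F(γ)) ≤ √(tr F(γ)). -/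

import Mathlib

open Finset Real

/-- multidimensional bound for the classification indicator. -/
theorem stmt12 {X : Type*} [Fintype X] [Nonempty X] {d : ℕ}
    (U : Set (Fin d → ℝ)) (hU : IsOpen U)
    (P : (Fin d → ℝ) → X → ℝ)
    (hpos : ∀ γ ∈ U, ∀ x : X, 0 < P γ x)
    (hsum : ∀ γ ∈ U, ∑ x : X, P γ x = 1)
    (hdiff : ∀ x : X, ∀ i : Fin d, ∀ γ ∈ U,
      DifferentiableAt ℝ (fun t : ℝ => P (Function.update γ i t) x) (γ i))
    (K : ℕ) (hK : 1 ≤ K)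
    (Q : Fin K → X → ℝ)
    (hQ0 : ∀ y x, 0 ≤ Q y x) (hQle : ∀ y x, Q y x ≤ 1)
    (hQsum : ∀ x : X, ∑ y : Fin K, Q y x = 1)
    (γ : Fin d → ℝ) (hγ : γ ∈ U) :
    (1 / (K : ℝ)) * ∑ y : Fin K,
        Real.sqrt (∑ i : Fin d,
          (deriv (fun s : ℝ => ∑ x : X, P (Function.update γ i s) x * Q y x) (γ i)) ^ 2)
      ≤ (1 / (K : ℝ)) * ∑ y : Fin K,
          Real.sqrt ((∑ x : X, P γ x * (Q y x) ^ 2) - (∑ x : X, P γ x * Q y x) ^ 2) *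
            Real.sqrt (∑ i : Fin d, ∑ x : X,
              (deriv (fun s : ℝ => P (Function.update γ i s) x) (γ i)) ^ 2 / P γ x) ∧
    (1 / (K : ℝ)) * ∑ y : Fin K,
        Real.sqrt ((∑ x : X, P γ x * (Q y x) ^ 2) - (∑ x : X, P γ x * Q y x) ^ 2) *
          Real.sqrt (∑ i : Fin d, ∑ x : X,
            (deriv (fun s : ℝ => P (Function.update γ i s) x) (γ i)) ^ 2 / P γ x)
      ≤ Real.sqrt (∑ i : Fin d, ∑ x : X,
          (deriv (fun s : ℝ => P (Function.update γ i s) x) (γ i)) ^ 2 / P γ x) := by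
  have hPpos : ∀ x : X, 0 < P γ x := hpos γ hγ
  have hP1 : ∑ x : X, P γ x = 1 := hsum γ hγ
  -- abbreviations
  set P' : Fin d → X → ℝ := fun i x => deriv (fun s : ℝ => P (Function.update γ i s) x) (γ i)
    with hP'def
  set F : ℝ := ∑ i : Fin d, ∑ x : X, (P' i x) ^ 2 / P γ x with hFdef
  have hF0 : 0 ≤ F := by
    apply Finset.sum_nonneg; intro i _
    apply Finset.sum_nonneg; intro x _
    exact div_nonneg (sq_nonneg _) (hPpos x).le
  -- update stays in U near γ i
  have hmem : ∀ i : Fin d, ∀ᶠ s in nhds (γ i), Function.update γ i s ∈ U := by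
    intro i
    have hc : Continuous (fun s : ℝ => Function.update γ i s) := by
      apply continuous_pi; intro j
      by_cases h : j = i
      · subst h; simpa [Function.update_apply] using continuous_id'
      · simpa [Function.update_apply, h] using (continuous_const : Continuous fun _ : ℝ => γ j)
    have h3 : U ∈ nhds (Function.update γ i (γ i)) := by
      rw [Function.update_eq_self]; exact hU.mem_nhds hγ
    exact hc.continuousAt h3
  -- sum of derivatives is zero
  have hsum0 : ∀ i : Fin d, ∑ x : X, P' i x = 0 := by
    intro i
    have hdsum : deriv (fun s : ℝ => ∑ x : X, P (Function.update γ i s) x) (γ i)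
        = ∑ x : X, P' i x :=
      deriv_fun_sum (fun x _ => hdiff x i γ hγ)
    have heq : (fun s : ℝ => ∑ x : X, P (Function.update γ i s) x)
        =ᶠ[nhds (γ i)] fun _ => (1 : ℝ) := by
      filter_upwards [hmem i] with s hs using hsum _ hs
    rw [← hdsum, heq.deriv_eq, deriv_const]
  -- derivative of the Q-weighted sum
  have hD : ∀ (y : Fin K) (i : Fin d),
      deriv (fun s : ℝ => ∑ x : X, P (Function.update γ i s) x * Q y x) (γ i)
        = ∑ x : X, P' i x * Q y x := by
    intro y i
    rw [deriv_fun_sum (fun x _ => (hdiff x i γ hγ).mul_const (Q y x))]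
    exact Finset.sum_congr rfl fun x _ => deriv_mul_const (hdiff x i γ hγ) (Q y x)
  -- variance identity
  have hsvar : ∀ y : Fin K,
      (∑ x : X, P γ x * (Q y x) ^ 2) - (∑ x : X, P γ x * Q y x) ^ 2
        = ∑ x : X, P γ x * (Q y x - ∑ z : X, P γ z * Q y z) ^ 2 := by
    intro y
    set m : ℝ := ∑ z : X, P γ z * Q y z with hm
    have expand : ∀ x : X, P γ x * (Q y x - m) ^ 2
        = P γ x * Q y x ^ 2 - 2 * m * (P γ x * Q y x) + m ^ 2 * P γ x := by
      intro x; ring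
    rw [Finset.sum_congr rfl fun x _ => expand x]
    rw [Finset.sum_add_distrib, Finset.sum_sub_distrib, ← Finset.mul_sum, ← Finset.mul_sum,
      hP1, ← hm]
    ring
  have hvar_nonneg : ∀ y : Fin K,
      0 ≤ (∑ x : X, P γ x * (Q y x) ^ 2) - (∑ x : X, P γ x * Q y x) ^ 2 := by
    intro y
    rw [hsvar y]
    exact Finset.sum_nonneg fun x _ => mul_nonneg (hPpos x).le (sq_nonneg _)
  -- Cauchy-Schwarz bound per y
  have hCS : ∀ y : Fin K,
      (∑ i : Fin d,
        (deriv (fun s : ℝ => ∑ x : X, P (Function.update γ i s) x * Q y x) (γ i)) ^ 2)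
      ≤ ((∑ x : X, P γ x * (Q y x) ^ 2) - (∑ x : X, P γ x * Q y x) ^ 2) * F := by
    intro y
    set m : ℝ := ∑ z : X, P γ z * Q y z with hm
    have key : ∀ i : Fin d,
        (deriv (fun s : ℝ => ∑ x : X, P (Function.update γ i s) x * Q y x) (γ i)) ^ 2
          ≤ (∑ x : X, P γ x * (Q y x - m) ^ 2) * (∑ x : X, (P' i x) ^ 2 / P γ x) := by
      intro i
      rw [hD y i]
      have hrw : ∑ x : X, P' i x * Q y x = ∑ x : X, P' i x * (Q y x - m) := by
        rw [Finset.sum_congr rfl (fun x _ => by ring :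
          ∀ x ∈ Finset.univ, P' i x * Q y x = P' i x * (Q y x - m) + m * P' i x)]
        rw [Finset.sum_add_distrib, ← Finset.mul_sum, hsum0 i, mul_zero, add_zero]
      rw [hrw]
      have hcs := Finset.sum_mul_sq_le_sq_mul_sq Finset.univ
        (fun x : X => Real.sqrt (P γ x) * (Q y x - m))
        (fun x : X => P' i x / Real.sqrt (P γ x))
      have h1 : ∀ x : X, Real.sqrt (P γ x) * (Q y x - m) * (P' i x / Real.sqrt (P γ x))
          = P' i x * (Q y x - m) := by
        intro x
        have hs : Real.sqrt (P γ x) ≠ 0 := (Real.sqrt_pos.mpr (hPpos x)).ne'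
        field_simp
      have h2 : ∀ x : X, (Real.sqrt (P γ x) * (Q y x - m)) ^ 2 = P γ x * (Q y x - m) ^ 2 := by
        intro x
        rw [mul_pow, Real.sq_sqrt (hPpos x).le]
      have h3 : ∀ x : X, (P' i x / Real.sqrt (P γ x)) ^ 2 = (P' i x) ^ 2 / P γ x := by
        intro x
        rw [div_pow, Real.sq_sqrt (hPpos x).le]
      calc (∑ x : X, P' i x * (Q y x - m)) ^ 2
          = (∑ x : X, Real.sqrt (P γ x) * (Q y x - m) * (P' i x / Real.sqrt (P γ x))) ^ 2 := by
            rw [Finset.sum_congr rfl fun x _ => (h1 x).symm]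
        _ ≤ (∑ x : X, (Real.sqrt (P γ x) * (Q y x - m)) ^ 2)
              * ∑ x : X, (P' i x / Real.sqrt (P γ x)) ^ 2 := hcs
        _ = (∑ x : X, P γ x * (Q y x - m) ^ 2) * ∑ x : X, (P' i x) ^ 2 / P γ x := by
            rw [Finset.sum_congr rfl fun x _ => h2 x, Finset.sum_congr rfl fun x _ => h3 x]
    calc (∑ i : Fin d,
          (deriv (fun s : ℝ => ∑ x : X, P (Function.update γ i s) x * Q y x) (γ i)) ^ 2)
        ≤ ∑ i : Fin d, (∑ x : X, P γ x * (Q y x - m) ^ 2) * (∑ x : X, (P' i x) ^ 2 / P γ x) :=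
          Finset.sum_le_sum fun i _ => key i
      _ = (∑ x : X, P γ x * (Q y x - m) ^ 2) * F := by rw [← Finset.mul_sum, hFdef]
      _ = ((∑ x : X, P γ x * (Q y x) ^ 2) - (∑ x : X, P γ x * Q y x) ^ 2) * F := by
          rw [hsvar y, hm]
  -- per-y sqrt bound
  have hmain : ∀ y : Fin K,
      Real.sqrt (∑ i : Fin d,
        (deriv (fun s : ℝ => ∑ x : X, P (Function.update γ i s) x * Q y x) (γ i)) ^ 2)
      ≤ Real.sqrt ((∑ x : X, P γ x * (Q y x) ^ 2) - (∑ x : X, P γ x * Q y x) ^ 2)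
          * Real.sqrt F := by
    intro y
    rw [← Real.sqrt_mul (hvar_nonneg y)]
    exact Real.sqrt_le_sqrt (hCS y)
  have hσle1 : ∀ y : Fin K,
      Real.sqrt ((∑ x : X, P γ x * (Q y x) ^ 2) - (∑ x : X, P γ x * Q y x) ^ 2) ≤ 1 := by
    intro y
    rw [show (1 : ℝ) = Real.sqrt 1 by rw [Real.sqrt_one]]
    apply Real.sqrt_le_sqrt
    have h1 : (∑ x : X, P γ x * (Q y x) ^ 2) ≤ ∑ x : X, P γ x := by
      apply Finset.sum_le_sum; intro x _
      have hq : Q y x ^ 2 ≤ 1 := by nlinarith [hQ0 y x, hQle y x]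
      calc P γ x * Q y x ^ 2 ≤ P γ x * 1 :=
            mul_le_mul_of_nonneg_left hq (hPpos x).le
        _ = P γ x := mul_one _
    nlinarith [sq_nonneg (∑ x : X, P γ x * Q y x)]
  have hKpos : (0 : ℝ) < K := Nat.cast_pos.mpr hK
  constructor
  · apply mul_le_mul_of_nonneg_left _ (by positivity)
    exact Finset.sum_le_sum fun y _ => hmain y
  · have hbound : ∀ y : Fin K,
        Real.sqrt ((∑ x : X, P γ x * (Q y x) ^ 2) - (∑ x : X, P γ x * Q y x) ^ 2)
          * Real.sqrt F ≤ Real.sqrt F := by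
      intro y
      calc Real.sqrt ((∑ x : X, P γ x * (Q y x) ^ 2) - (∑ x : X, P γ x * Q y x) ^ 2)
            * Real.sqrt F ≤ 1 * Real.sqrt F :=
          mul_le_mul_of_nonneg_right (hσle1 y) (Real.sqrt_nonneg F)
        _ = Real.sqrt F := one_mul _
    calc (1 / (K : ℝ)) * ∑ y : Fin K,
          Real.sqrt ((∑ x : X, P γ x * (Q y x) ^ 2) - (∑ x : X, P γ x * Q y x) ^ 2)
            * Real.sqrt F
        ≤ (1 / (K : ℝ)) * ∑ _y : Fin K, Real.sqrt F := by
          apply mul_le_mul_of_nonneg_left _ (by positivity)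
          exact Finset.sum_le_sum fun y _ => hbound y
      _ = Real.sqrt F := by
          rw [Finset.sum_const, Finset.card_univ, Fintype.card_fin, nsmul_eq_mul]
          field_simp
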